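/- arXiv:1211.5122 — 6 statements merged into one kernel-verified Lean document; each statement's English description precedes it below -/
import Mathlib

section
/- The cycle C_6 on six vertices admits no edge weighting with weights from {1,2} which properly colours the vertices by sums. -/
open Finset

/-- The cycle `C₆` admits no edge weighting with weights from `{1,2}` which
properly colours the vertices by sums.  Vertices are `Fin 6`, with `u` adjacent
to `v` iff `v = u + 1` or `u = v + 1` (mod 6). -/
theorem c6_no_two_weighting :
    ¬ ∃ w : Fin 6 → Fin 6 → ℕ,
      (∀ u v, w u v = w v u) ∧
      (∀ u v : Fin 6, (v = u + 1 ∨ u = v + 1) → w u v ∈ ({1, 2} : Set ℕ)) ∧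
      (∀ u v : Fin 6, (v = u + 1 ∨ u = v + 1) →
        (∑ x ∈ Finset.univ.filter (fun x => x = u + 1 ∨ u = x + 1), w u x) ≠
        (∑ x ∈ Finset.univ.filter (fun x => x = v + 1 ∨ v = x + 1), w v x)) := by
  rintro ⟨w, hsym, hmem, hne⟩
  have e : ∀ u : Fin 6, (Finset.univ.filter (fun x => x = u + 1 ∨ u = x + 1))
      = {u + 1, u - 1} := by decide
  have key : ∀ u : Fin 6, (∑ x ∈ Finset.univ.filter (fun x => x = u + 1 ∨ u = x + 1), w u x)
      = w u (u + 1) + w u (u - 1) := by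
    intro u
    rw [e u, Finset.sum_pair (by revert u; decide)]
  have h01 := hne 0 1 (Or.inl rfl)
  have h23 := hne 2 3 (Or.inl rfl)
  have h45 := hne 4 5 (Or.inl rfl)
  rw [key, key] at h01 h23 h45
  simp only [Fin.reduceAdd, Fin.reduceSub] at h01 h23 h45
  simp only [hsym 0 5, hsym 1 0, hsym 2 1, hsym 3 2, hsym 4 3, hsym 5 4] at h01 h23 h45
  have m01 := hmem 0 1 (Or.inl rfl)
  have m12 := hmem 1 2 (Or.inl rfl)
  have m23 := hmem 2 3 (Or.inl rfl)
  have m34 := hmem 3 4 (Or.inl rfl)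
  have m45 := hmem 4 5 (Or.inl rfl)
  have m50 := hmem 5 0 (Or.inl rfl)
  simp only [Set.mem_insert_iff, Set.mem_singleton_iff] at m01 m12 m23 m34 m45 m50
  omega
end

section
/- Every cycle C_n with n ≥ 3 admits an edge weighting with weights from {1,2,3} which properly colours the vertices by sums; that is, χ^e_Σ(C_n) ≤ 3. -/
open Finset

/-- Weight of the cycle edge `{i, i+1}` (indices mod `n`). -/
def cycF (n i : ℕ) : ℕ :=
  if n = 3 then i + 1 else if n - 2 ≤ i then 3 else 1 + i / 2 % 2

lemma cycF_mem (n i : ℕ) (hn : 3 ≤ n) (hi : i < n) :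
    cycF n i ∈ ({1, 2, 3} : Set ℕ) := by
  simp only [Set.mem_insert_iff, Set.mem_singleton_iff]
  unfold cycF
  split_ifs <;> omega

lemma cycF_key (n i : ℕ) (hn : 3 ≤ n) (hi : i < n) :
    cycF n i ≠ cycF n ((i + 2) % n) := by
  by_cases h3 : n = 3
  · subst h3; interval_cases i <;> decide
  · by_cases h2 : i + 2 < n
    · rw [Nat.mod_eq_of_lt h2]
      unfold cycF
      split_ifs <;> omega
    · have hm : (i + 2) % n = i + 2 - n := by
        rw [Nat.mod_eq_sub_mod (by omega)]
        exact Nat.mod_eq_of_lt (by omega)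
      rw [hm]
      unfold cycF
      split_ifs <;> omega

/-- Every cycle `Cₙ` with `n ≥ 3` admits an edge weighting with weights from
`{1,2,3}` which properly colours the vertices by sums, i.e. `χ^e_Σ(Cₙ) ≤ 3`.
Vertices are `Fin n`, with `u` adjacent to `v` iff `v = u + 1` or `u = v + 1`
(mod `n`). -/
theorem cycle_sum_three_weighting (n : ℕ) [NeZero n] (hn : 3 ≤ n) :
    ∃ w : Fin n → Fin n → ℕ,
      (∀ u v, w u v = w v u) ∧
      (∀ u v : Fin n, (v = u + 1 ∨ u = v + 1) → w u v ∈ ({1, 2, 3} : Set ℕ)) ∧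
      (∀ u v : Fin n, (v = u + 1 ∨ u = v + 1) →
        (∑ x ∈ Finset.univ.filter (fun x => x = u + 1 ∨ u = x + 1), w u x) ≠
        (∑ x ∈ Finset.univ.filter (fun x => x = v + 1 ∨ v = x + 1), w v x)) := by
  classical
  letI : CommRing (Fin n) := Fin.instCommRing n
  have hv1 : (1 : Fin n).val = 1 := by
    rw [Fin.val_one' n]; exact Nat.mod_eq_of_lt (by omega)
  have hv2 : (2 : Fin n).val = 2 := by
    have h11 : (2 : Fin n) = 1 + 1 := by norm_num
    rw [h11, Fin.add_def, hv1]
    exact Nat.mod_eq_of_lt (by omega)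
  -- `u + 2 ≠ u` in `Fin n`
  have htwo : ∀ u : Fin n, u + 2 ≠ u := by
    intro u h
    have hval := congrArg Fin.val h
    rw [Fin.add_def, hv2] at hval
    have hval2 : (u.val + 2) % n = u.val := hval
    by_cases hlt : u.val + 2 < n
    · rw [Nat.mod_eq_of_lt hlt] at hval2; omega
    · rw [Nat.mod_eq_sub_mod (by omega),
        Nat.mod_eq_of_lt (by have := u.isLt; omega)] at hval2
      have := u.isLt; omega
  have hne : ∀ u : Fin n, (u + 1 : Fin n) ≠ u - 1 := by
    intro u h
    apply htwo (u - 1)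
    calc u - 1 + 2 = u + 1 := by ring
    _ = u - 1 := h
  have hnot : ∀ u : Fin n, ¬ (u = u + 1 + 1) := by
    intro u hh
    exact htwo u (by rw [show u + 2 = u + 1 + 1 by ring]; exact hh.symm)
  set w : Fin n → Fin n → ℕ := fun u v =>
    if v = u + 1 then cycF n u.val else if u = v + 1 then cycF n v.val else 0
    with hw
  have hfilter : ∀ u : Fin n,
      Finset.univ.filter (fun x => x = u + 1 ∨ u = x + 1) = {u + 1, u - 1} := by
    intro u
    ext x
    have hx : (u = x + 1) ↔ x = u - 1 := by rw [eq_comm, eq_sub_iff_add_eq]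
    simp [Finset.mem_filter, hx]
  have hsum : ∀ u : Fin n,
      (∑ x ∈ Finset.univ.filter (fun x => x = u + 1 ∨ u = x + 1), w u x)
        = cycF n u.val + cycF n (u - 1).val := by
    intro u
    rw [hfilter u, Finset.sum_pair (hne u)]
    have e1 : u - 1 + 1 = u := by ring
    simp [hw, e1, Ne.symm (hne u)]
  have claim : ∀ u : Fin n,
      (∑ x ∈ Finset.univ.filter (fun x => x = u + 1 ∨ u = x + 1), w u x) ≠
      (∑ x ∈ Finset.univ.filter (fun x => x = (u+1) + 1 ∨ (u+1) = x + 1), w (u+1) x) := by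
    intro u
    rw [hsum u, hsum (u + 1)]
    have e2 : u + 1 - 1 = u := by ring
    rw [e2]
    have hval : (u + 1).val = ((u - 1).val + 2) % n := by
      have e3 : u + 1 = (u - 1) + 2 := by ring
      rw [e3, Fin.add_def, hv2]
    have hkey := cycF_key n (u - 1).val hn (u - 1).isLt
    rw [← hval] at hkey
    omega
  refine ⟨w, ?_, ?_, ?_⟩
  · intro u v
    by_cases h1 : v = u + 1
    · by_cases h2 : u = v + 1
      · exfalso
        apply htwo v
        calc v + 2 = v + 1 + 1 := by ring
        _ = u + 1 := by rw [← h2]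
        _ = v := h1.symm
      · simp [hw, h1, h2, hnot u]
    · by_cases h2 : u = v + 1 <;> simp [hw, h1, h2, hnot v]
  · intro u v h
    by_cases h1 : v = u + 1
    · have := cycF_mem n u.val hn u.isLt
      simpa [hw, h1] using this
    · rcases h with h | h
      · exact absurd h h1
      · have := cycF_mem n v.val hn v.isLt
        simpa [hw, h1, h, hnot v] using this
  · intro u v h
    rcases h with h | h
    · subst h; exact claim u
    · subst h; exact (claim v).symm
end

section
/- If G is a d-degenerate graph, then ch^v_Σ(G) ≤ d·Δ(G) + 1, i.e., for any assignment of lists of d·Δ(G)+1 real numbers to the vertices, there is a choice of weights from the lists so that adjacent vertices receive distinct sums of weights over their neighbourhoods. -/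
open Finset

lemma exists_ordering {V : Type*} [Fintype V] [DecidableEq V]
    (G : SimpleGraph V) [DecidableRel G.Adj] (d : ℕ)
    (hdeg : ∀ s : Finset V, s.Nonempty → ∃ v ∈ s, (s.filter (G.Adj v)).card ≤ d)
    (s : Finset V) : ∃ f : V → ℕ, Set.InjOn f s ∧
      ∀ v ∈ s, (s.filter (fun u => G.Adj v u ∧ f u < f v)).card ≤ d := by
  induction s using Finset.strongInduction with
  | _ s ih =>
    rcases s.eq_empty_or_nonempty with rfl | hne
    · exact ⟨fun _ => 0, by simp, by simp⟩
    · obtain ⟨v, hv, hvd⟩ := hdeg s hne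
      obtain ⟨f, hinj, hf⟩ := ih (s.erase v) (Finset.erase_ssubset hv)
      refine ⟨Function.update f v ((s.sup f) + 1), ?_, ?_⟩
      · intro x hx y hy hxy
        by_cases hxv : x = v <;> by_cases hyv : y = v
        · rw [hxv, hyv]
        · exfalso
          rw [hxv, Function.update_self, Function.update_of_ne hyv] at hxy
          have : f y ≤ s.sup f := Finset.le_sup hy
          omega
        · exfalso
          rw [hyv, Function.update_self, Function.update_of_ne hxv] at hxy
          have : f x ≤ s.sup f := Finset.le_sup hx
          omega
        · rw [Function.update_of_ne hxv, Function.update_of_ne hyv] at hxy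
          exact hinj (Finset.mem_erase.2 ⟨hxv, hx⟩) (Finset.mem_erase.2 ⟨hyv, hy⟩) hxy
      · intro w hw
        by_cases hwv : w = v
        · subst hwv
          refine le_trans (Finset.card_le_card ?_) hvd
          intro u hu
          rw [Finset.mem_filter] at hu ⊢
          exact ⟨hu.1, hu.2.1⟩
        · have hw' : w ∈ s.erase v := Finset.mem_erase.2 ⟨hwv, hw⟩
          refine le_trans (Finset.card_le_card ?_) (hf w hw')
          intro u hu
          rw [Finset.mem_filter] at hu
          obtain ⟨hus, hadj, hlt⟩ := hu
          have hfw : Function.update f v ((s.sup f) + 1) w = f w := Function.update_of_ne hwv _ _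
          have huv : u ≠ v := by
            intro h; subst h
            rw [Function.update_self, hfw] at hlt
            have : f w ≤ s.sup f := Finset.le_sup (Finset.mem_of_mem_erase hw')
            omega
          rw [Finset.mem_filter, Finset.mem_erase]
          rw [Function.update_of_ne huv, hfw] at hlt
          exact ⟨⟨huv, hus⟩, hadj, hlt⟩

/-- If `G` is `d`-degenerate (every nonempty set of vertices contains a vertex
with at most `d` neighbours inside the set), then `ch^v_Σ(G) ≤ d·Δ(G) + 1`:
from any assignment of lists of `d·Δ(G) + 1` real numbers to the vertices one
can choose weights so that adjacent vertices receive distinct sums of weights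
over their neighbourhoods. -/
theorem degenerate_additive_choosability {V : Type*} [Fintype V] [DecidableEq V]
    (G : SimpleGraph V) [DecidableRel G.Adj] (d : ℕ)
    (hdeg : ∀ s : Finset V, s.Nonempty → ∃ v ∈ s, (s.filter (G.Adj v)).card ≤ d)
    (L : V → Finset ℝ) (hL : ∀ v, (L v).card = d * G.maxDegree + 1) :
    ∃ w : V → ℝ, (∀ v, w v ∈ L v) ∧
      ∀ u v, G.Adj u v →
        (∑ x ∈ G.neighborFinset u, w x) ≠ (∑ x ∈ G.neighborFinset v, w x) := by
  obtain ⟨f, hinj, hback⟩ := exists_ordering G d hdeg Finset.univ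
  have hmemadj : ∀ a b : V, a ∈ G.neighborFinset b ↔ G.Adj b a := by
    intro a b; rw [SimpleGraph.mem_neighborFinset]
  have hLne : ∀ v, (L v).Nonempty := by
    intro v; rw [← Finset.card_pos, hL v]; omega
  have key : ∀ n : ℕ, ∃ w : V → ℝ, (∀ v, w v ∈ L v) ∧
      ∀ u v, G.Adj u v →
        (∀ x, (x ∈ G.neighborFinset u ↔ x ∈ G.neighborFinset v) ∨ f x < n) →
        (∑ x ∈ G.neighborFinset u, w x) ≠ (∑ x ∈ G.neighborFinset v, w x) := by
    intro n
    induction n with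
    | zero =>
      choose w hw using fun v => hLne v
      refine ⟨w, hw, ?_⟩
      intro u v huv hcond
      rcases hcond u with h | h
      · have h1 : u ∈ G.neighborFinset v := by
          rw [SimpleGraph.mem_neighborFinset]; exact huv.symm
        have h2 : u ∉ G.neighborFinset u := by
          rw [SimpleGraph.mem_neighborFinset]; exact fun h => G.loopless.irrefl u h
        exact absurd (h.2 h1) h2
      · omega
    | succ n ih =>
      obtain ⟨w, hw, hcon⟩ := ih
      by_cases hp : ∃ p : V, f p = n
      · obtain ⟨p, hfp⟩ := hp
        set B : Finset V := univ.filter (fun u => G.Adj p u ∧ f u < f p) with hB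
        have hBd : B.card ≤ d := hback p (Finset.mem_univ p)
        set T : Finset (V × V) := (univ ×ˢ univ).filter
          (fun q => G.Adj q.1 q.2 ∧ G.Adj q.1 p ∧ ¬ G.Adj q.2 p ∧ f q.1 < f p) with hT
        have hTsub : T ⊆ B.biUnion (fun u => ({u} : Finset V) ×ˢ G.neighborFinset u) := by
          intro q hq
          rw [hT, Finset.mem_filter] at hq
          obtain ⟨-, hadj, hup, -, hlt⟩ := hq
          rw [Finset.mem_biUnion]
          refine ⟨q.1, ?_, ?_⟩
          · rw [hB, Finset.mem_filter]
            exact ⟨Finset.mem_univ _, hup.symm, hlt⟩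
          · rw [Finset.mem_product, Finset.mem_singleton, SimpleGraph.mem_neighborFinset]
            exact ⟨rfl, hadj⟩
        have hTcard : T.card ≤ d * G.maxDegree := by
          calc T.card ≤ (B.biUnion (fun u => ({u} : Finset V) ×ˢ G.neighborFinset u)).card :=
                Finset.card_le_card hTsub
            _ ≤ ∑ u ∈ B, (({u} : Finset V) ×ˢ G.neighborFinset u).card :=
                Finset.card_biUnion_le
            _ ≤ ∑ u ∈ B, G.maxDegree := by
                refine Finset.sum_le_sum ?_
                intro u _
                rw [Finset.card_product, Finset.card_singleton, one_mul]
                exact G.degree_le_maxDegree u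
            _ = B.card * G.maxDegree := by rw [Finset.sum_const, smul_eq_mul]
            _ ≤ d * G.maxDegree := Nat.mul_le_mul_right _ hBd
        set Bad : Finset ℝ := T.image (fun q =>
          (∑ x ∈ G.neighborFinset q.2, w x) - ∑ x ∈ (G.neighborFinset q.1).erase p, w x) with hBad
        have hBadcard : Bad.card < (L p).card := by
          rw [hL p]
          exact lt_of_le_of_lt (le_trans Finset.card_image_le hTcard) (Nat.lt_succ_self _)
        obtain ⟨a, haL, haBad⟩ : ∃ a ∈ L p, a ∉ Bad := by
          have : (L p \ Bad).Nonempty := by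
            rw [← Finset.card_pos]
            have := Finset.le_card_sdiff Bad (L p)
            omega
          obtain ⟨a, ha⟩ := this
          rw [Finset.mem_sdiff] at ha
          exact ⟨a, ha.1, ha.2⟩
        set w' : V → ℝ := Function.update w p a with hw'def
        have hw'mem : ∀ v, w' v ∈ L v := by
          intro v
          by_cases hvp : v = p
          · subst hvp; rw [hw'def, Function.update_self]; exact haL
          · rw [hw'def, Function.update_of_ne hvp]; exact hw v
        have hw'eq : ∀ x ≠ p, w' x = w x := fun x hx => Function.update_of_ne hx _ _
        have hsum : ∀ u : V, p ∈ G.neighborFinset u →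
            ∑ x ∈ G.neighborFinset u, w' x = a + ∑ x ∈ (G.neighborFinset u).erase p, w x := by
          intro u hpu
          rw [← Finset.add_sum_erase _ w' hpu, hw'def, Function.update_self]
          congr 1
          refine Finset.sum_congr rfl ?_
          intro x hx
          exact hw'eq x (Finset.ne_of_mem_erase hx)
        have hsumw : ∀ u : V, p ∈ G.neighborFinset u →
            ∑ x ∈ G.neighborFinset u, w x = w p + ∑ x ∈ (G.neighborFinset u).erase p, w x :=
          fun u hpu => (Finset.add_sum_erase _ w hpu).symm
        have hsame : ∀ u : V, p ∉ G.neighborFinset u →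
            ∑ x ∈ G.neighborFinset u, w' x = ∑ x ∈ G.neighborFinset u, w x := by
          intro u hpu
          refine Finset.sum_congr rfl ?_
          intro x hx
          exact hw'eq x (fun h => hpu (h ▸ hx))
        refine ⟨w', hw'mem, ?_⟩
        intro u v huv hcond
        -- index facts
        have hflt : ∀ x, ¬ (x ∈ G.neighborFinset u ↔ x ∈ G.neighborFinset v) → x ≠ p → f x < f p := by
          intro x hx hxp
          rcases hcond x with h | h
          · exact absurd h hx
          · have : f x ≠ n := fun h' => hxp (hinj (Finset.mem_coe.2 (Finset.mem_univ x)) (Finset.mem_coe.2 (Finset.mem_univ p)) (by rw [h', hfp]))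
            omega
        by_cases hu : p ∈ G.neighborFinset u <;> by_cases hv : p ∈ G.neighborFinset v
        · -- p in both: reduce to hcon
          have hne := hcon u v huv (by
            intro x
            rcases hcond x with h | h
            · exact Or.inl h
            · by_cases hxp : x = p
              · subst hxp; exact Or.inl ⟨fun _ => hv, fun _ => hu⟩
              · by_cases hiff : x ∈ G.neighborFinset u ↔ x ∈ G.neighborFinset v
                · exact Or.inl hiff
                · have := hflt x hiff hxp; exact Or.inr (by omega))
          rw [hsum u hu, hsum v hv]
          rw [hsumw u hu, hsumw v hv] at hne
          intro h; apply hne; linarith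
        · -- p ∈ N(u) \ N(v)
          have hfu : f u < f p := by
            refine hflt u ?_ ?_
            · intro hiff
              have h1 : u ∈ G.neighborFinset v := by
                rw [SimpleGraph.mem_neighborFinset]; exact huv.symm
              exact G.loopless.irrefl u ((hmemadj _ _).1 (hiff.2 h1))
            · intro h; subst h
              exact G.loopless.irrefl u ((hmemadj _ _).1 hu)
          have hmemT : (u, v) ∈ T := by
            rw [hT, Finset.mem_filter]
            refine ⟨Finset.mem_mk.2 ?_, huv, (hmemadj _ _).1 hu, ?_, hfu⟩
            · exact Finset.mem_product.2 ⟨Finset.mem_univ _, Finset.mem_univ _⟩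
            · intro h; exact hv ((hmemadj _ _).2 h)
          rw [hsum u hu, hsame v hv]
          intro h
          apply haBad
          rw [hBad, Finset.mem_image]
          exact ⟨(u, v), hmemT, by dsimp; linarith⟩
        · -- p ∈ N(v) \ N(u)
          have hfv : f v < f p := by
            refine hflt v ?_ ?_
            · intro hiff
              have h1 : v ∈ G.neighborFinset u := by
                rw [SimpleGraph.mem_neighborFinset]; exact huv
              exact G.loopless.irrefl v ((hmemadj _ _).1 (hiff.1 h1))
            · intro h; subst h
              exact G.loopless.irrefl v ((hmemadj _ _).1 hv)
          have hmemT : (v, u) ∈ T := by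
            rw [hT, Finset.mem_filter]
            refine ⟨Finset.mem_mk.2 ?_, huv.symm, (hmemadj _ _).1 hv, ?_, hfv⟩
            · exact Finset.mem_product.2 ⟨Finset.mem_univ _, Finset.mem_univ _⟩
            · intro h; exact hu ((hmemadj _ _).2 h)
          rw [hsame u hu, hsum v hv]
          intro h
          apply haBad
          rw [hBad, Finset.mem_image]
          exact ⟨(v, u), hmemT, by dsimp; linarith⟩
        · -- p in neither: reduce to hcon
          have hne := hcon u v huv (by
            intro x
            rcases hcond x with h | h
            · exact Or.inl h
            · by_cases hxp : x = p
              · subst hxp; exact Or.inl ⟨fun h' => absurd h' hu, fun h' => absurd h' hv⟩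
              · by_cases hiff : x ∈ G.neighborFinset u ↔ x ∈ G.neighborFinset v
                · exact Or.inl hiff
                · have := hflt x hiff hxp; omega)
          rw [hsame u hu, hsame v hv]
          exact hne
      · -- no vertex with index n
        refine ⟨w, hw, ?_⟩
        intro u v huv hcond
        refine hcon u v huv ?_
        intro x
        rcases hcond x with h | h
        · exact Or.inl h
        · have : f x ≠ n := fun h' => hp ⟨x, h'⟩
          omega
  obtain ⟨w, hw, hcon⟩ := key ((Finset.univ.sup f) + 1)
  refine ⟨w, hw, ?_⟩
  intro u v huv
  refine hcon u v huv ?_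
  intro x
  refine Or.inr ?_
  have : f x ≤ Finset.univ.sup f := Finset.le_sup (Finset.mem_univ x)
  omega
end

section
/- For every digraph D and any assignment of lists L_a of two real numbers to each arc a, there is a choice of arc weights w(a) ∈ L_a such that for every arc (u,v), the value (sum of weights of arcs into u minus sum of weights of arcs out of u) differs from the corresponding value at v. That is, ch^e_Σ(D) ≤ 2 for digraphs. -/
open Finset

private def colr {V : Type*} [Fintype V] [DecidableEq V] (A : V → V → Prop) [DecidableRel A]
    (g : V × V → ℝ) (z : V) : ℝ :=
  (∑ x ∈ Finset.univ.filter (fun x => A x z), g (x, z)) -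
  (∑ x ∈ Finset.univ.filter (fun x => A z x), g (z, x))

private def phi {V : Type*} [Fintype V] [DecidableEq V] (A : V → V → Prop) [DecidableRel A]
    (g : V × V → ℝ) : ℝ := ∑ z, (colr A g z) ^ 2

/-- For every loopless digraph `D` (given by an irreflexive arc relation `A`)
and every assignment of lists of two real numbers to the arcs, there is a choice
of arc weights from the lists such that for every arc `(u,v)` the value
`(sum of weights of incoming arcs) − (sum of weights of outgoing arcs)` at `u`
differs from the corresponding value at `v`: `ch^e_Σ(D) ≤ 2` for digraphs. -/
theorem digraph_list_two_weighting {V : Type*} [Fintype V] [DecidableEq V]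
    (A : V → V → Prop) [DecidableRel A] (hirr : ∀ v, ¬ A v v)
    (L : V → V → Finset ℝ) (hL : ∀ u v, A u v → (L u v).card = 2) :
    ∃ w : V → V → ℝ, (∀ u v, A u v → w u v ∈ L u v) ∧
      ∀ u v, A u v →
        ((∑ x ∈ Finset.univ.filter (fun x => A x u), w x u) -
          (∑ x ∈ Finset.univ.filter (fun x => A u x), w u x)) ≠
        ((∑ x ∈ Finset.univ.filter (fun x => A x v), w x v) -
          (∑ x ∈ Finset.univ.filter (fun x => A v x), w v x)) := by
  classical
  set S : Finset (V × V → ℝ) :=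
    Fintype.piFinset (fun p : V × V => if A p.1 p.2 then L p.1 p.2 else {0}) with hS
  have hSne : S.Nonempty := by
    rw [hS, Fintype.piFinset_nonempty]
    intro p
    split_ifs with h
    · exact Finset.card_pos.mp (by rw [hL p.1 p.2 h]; norm_num)
    · exact ⟨0, Finset.mem_singleton_self 0⟩
  obtain ⟨g₀, hg₀S, hmax⟩ := S.exists_max_image (phi A) hSne
  have hmem : ∀ u v, A u v → g₀ (u, v) ∈ L u v := by
    intro u v huv
    have := Fintype.mem_piFinset.mp hg₀S (u, v)
    simpa [if_pos huv] using this
  refine ⟨fun a b => g₀ (a, b), fun u v huv => hmem u v huv, ?_⟩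
  intro u v huv
  show colr A g₀ u ≠ colr A g₀ v
  intro hcc
  have huvne : u ≠ v := fun h => hirr v (h ▸ huv)
  have hw : g₀ (u, v) ∈ L u v := hmem u v huv
  obtain ⟨y, hy, hyne⟩ : ∃ y ∈ L u v, y ≠ g₀ (u, v) := by
    have h2 : (L u v).card = 2 := hL u v huv
    have hne : ((L u v).erase (g₀ (u, v))).Nonempty := by
      rw [← Finset.card_pos, Finset.card_erase_of_mem hw, h2]; norm_num
    obtain ⟨y, hy⟩ := hne
    exact ⟨y, Finset.mem_of_mem_erase hy, Finset.ne_of_mem_erase hy⟩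
  set δ : ℝ := y - g₀ (u, v) with hδ
  have hδne : δ ≠ 0 := sub_ne_zero.mpr hyne
  set g₁ : V × V → ℝ := Function.update g₀ (u, v) y with hg₁
  have hg₁S : g₁ ∈ S := by
    rw [hS, Fintype.mem_piFinset]
    intro p
    by_cases hp : p = (u, v)
    · subst hp
      simp only [hg₁, Function.update_self, if_pos huv]
      exact hy
    · rw [hg₁, Function.update_of_ne hp]
      exact Fintype.mem_piFinset.mp hg₀S p
  have hval : ∀ p : V × V, g₁ p = g₀ p + (if p = (u, v) then δ else 0) := by
    intro p
    by_cases hp : p = (u, v)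
    · rw [hp, hg₁, Function.update_self, if_pos rfl, hδ]; ring
    · simp [hg₁, Function.update_of_ne hp, hp]
  have hcv : ∀ z, colr A g₁ z = colr A g₀ z + (if z = u then -δ else if z = v then δ else 0) := by
    intro z
    have hin : ∑ x ∈ Finset.univ.filter (fun x => A x z), g₁ (x, z)
        = (∑ x ∈ Finset.univ.filter (fun x => A x z), g₀ (x, z)) + (if z = v then δ else 0) := by
      rw [Finset.sum_congr rfl (fun x _ => hval (x, z)), Finset.sum_add_distrib]
      congr 1
      by_cases hz : z = v
      · rw [if_pos hz]
        have heq : ∀ x : V, ((x, z) = (u, v)) = (x = u) := by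
          intro x; simp [Prod.ext_iff, hz]
        simp only [heq]
        rw [Finset.sum_ite_eq' _ u (fun _ => δ), if_pos (by simp [hz, huv])]
      · rw [if_neg hz]
        apply Finset.sum_eq_zero
        intro x _
        rw [if_neg (by simp [Prod.ext_iff, hz])]
    have hout : ∑ x ∈ Finset.univ.filter (fun x => A z x), g₁ (z, x)
        = (∑ x ∈ Finset.univ.filter (fun x => A z x), g₀ (z, x)) + (if z = u then δ else 0) := by
      rw [Finset.sum_congr rfl (fun x _ => hval (z, x)), Finset.sum_add_distrib]
      congr 1
      by_cases hz : z = u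
      · rw [if_pos hz]
        have heq : ∀ x : V, ((z, x) = (u, v)) = (x = v) := by
          intro x; simp [Prod.ext_iff, hz]
        simp only [heq]
        rw [Finset.sum_ite_eq' _ v (fun _ => δ), if_pos (by simp [hz, huv])]
      · rw [if_neg hz]
        apply Finset.sum_eq_zero
        intro x _
        rw [if_neg (by simp [Prod.ext_iff, hz])]
    simp only [colr]
    rw [hin, hout]
    by_cases h1 : z = u
    · have h2 : z ≠ v := by rw [h1]; exact huvne
      simp only [if_pos h1, if_neg h2]; ring
    · simp only [if_neg h1]
      by_cases h2 : z = v
      · simp only [if_pos h2]; ring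
      · simp only [if_neg h2]; ring
  have hsq : ∀ z, (colr A g₁ z) ^ 2 = (colr A g₀ z) ^ 2 +
      ((if z = u then δ ^ 2 - 2 * δ * colr A g₀ u else 0) +
       (if z = v then δ ^ 2 + 2 * δ * colr A g₀ v else 0)) := by
    intro z
    rw [hcv z]
    by_cases h1 : z = u
    · have h2 : z ≠ v := by rw [h1]; exact huvne
      simp only [if_pos h1, if_neg h2]
      rw [h1]; ring
    · simp only [if_neg h1]
      by_cases h2 : z = v
      · simp only [if_pos h2]
        rw [h2]; ring
      · simp only [if_neg h2]; ring
  have hΦ : phi A g₁ = phi A g₀ + 2 * δ ^ 2 := by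
    simp only [phi]
    rw [Finset.sum_congr rfl (fun z _ => hsq z), Finset.sum_add_distrib,
      Finset.sum_add_distrib, Finset.sum_ite_eq' _ u, Finset.sum_ite_eq' _ v,
      if_pos (Finset.mem_univ u), if_pos (Finset.mem_univ v)]
    rw [hcc]; ring
  have hle : phi A g₁ ≤ phi A g₀ := hmax g₁ hg₁S
  have hpos : 0 < δ ^ 2 := by positivity
  linarith
end

section
/- For every graph G, the edge-version multiset irregularity parameter of the line graph is bounded by the chromatic index: χ'^e_m(G) ≤ χ'(G), i.e., there exists an edge weighting w: E(G) → {1,...,χ'(G)} such that for every pair of adjacent edges e, f, the multiset of weights of edges adjacent to e differs from the multiset of weights of edges adjacent to f. -/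
open Finset

/-- `χ'^e_m(G) ≤ χ'(G)`: whenever `G` has a proper edge colouring with colours
in `{1,…,m}`, there is an edge weighting with weights in `{1,…,m}` such that
any two adjacent edges receive distinct multisets of weights of their adjacent
edges.  (Two distinct edges are adjacent if they share an endpoint.) -/
theorem edge_multiset_bound_by_chromatic_index {V : Type*} [Fintype V] [DecidableEq V]
    (G : SimpleGraph V) [DecidableRel G.Adj] (m : ℕ)
    (c : Sym2 V → ℕ)
    (hmem : ∀ e ∈ G.edgeFinset, c e ∈ Finset.Icc 1 m)
    (hproper : ∀ e ∈ G.edgeFinset, ∀ f ∈ G.edgeFinset,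
      e ≠ f → (∃ v, v ∈ e ∧ v ∈ f) → c e ≠ c f) :
    ∃ w : Sym2 V → ℕ,
      (∀ e ∈ G.edgeFinset, w e ∈ Finset.Icc 1 m) ∧
      (∀ e ∈ G.edgeFinset, ∀ f ∈ G.edgeFinset, e ≠ f → (∃ v, v ∈ e ∧ v ∈ f) →
        Multiset.map w ((G.edgeFinset.filter (fun g => g ≠ e ∧ ∃ v, v ∈ e ∧ v ∈ g)).val) ≠
        Multiset.map w ((G.edgeFinset.filter (fun g => g ≠ f ∧ ∃ v, v ∈ f ∧ v ∈ g)).val)) := by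
  refine ⟨c, hmem, ?_⟩
  rintro e he f hf hne ⟨v, hve, hvf⟩ hEq
  have h1 : c e ∈ Multiset.map c
      ((G.edgeFinset.filter (fun g => g ≠ f ∧ ∃ v, v ∈ f ∧ v ∈ g)).val) := by
    apply Multiset.mem_map_of_mem
    simp only [Finset.mem_val, Finset.mem_filter]
    exact ⟨he, hne, v, hvf, hve⟩
  rw [← hEq] at h1
  obtain ⟨g, hg, hcg⟩ := Multiset.mem_map.mp h1
  simp only [Finset.mem_val, Finset.mem_filter] at hg
  obtain ⟨hgE, hgne, v', hv'e, hv'g⟩ := hg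
  exact hproper g hgE e he hgne ⟨v', hv'g, hv'e⟩ hcg
end

section
/- Let a be a positive real. For the path P on 4k+2 vertices (k ≥ 1), assigning the list {0, a} to every edge, there is no choice of edge weights from the lists which properly colours the vertices by sums. Consequently ch^e_Σ(P) > 2 is witnessed for the path on 6 vertices with lists {0,a}. -/
open Finset

/-- Let `a > 0` and `k ≥ 1`.  For the path on `4k + 2` vertices, if every edge
is assigned the list `{0, a}`, there is no choice of edge weights from the
lists which properly colours the vertices by sums.  (The case `k = 1` is the
path on 6 vertices, witnessing `ch^e_Σ(P₆) > 2`.) -/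
theorem path_list_zero_a_no_weighting (a : ℝ) (ha : 0 < a) (k : ℕ) (hk : 1 ≤ k) :
    ¬ ∃ w : Fin (4 * k + 2) → Fin (4 * k + 2) → ℝ,
      (∀ u v, w u v = w v u) ∧
      (∀ u v : Fin (4 * k + 2), (u.val + 1 = v.val ∨ v.val + 1 = u.val) →
        w u v ∈ ({0, a} : Set ℝ)) ∧
      (∀ u v : Fin (4 * k + 2), (u.val + 1 = v.val ∨ v.val + 1 = u.val) →
        (∑ x ∈ Finset.univ.filter
            (fun x : Fin (4 * k + 2) => u.val + 1 = x.val ∨ x.val + 1 = u.val), w u x) ≠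
        (∑ x ∈ Finset.univ.filter
            (fun x : Fin (4 * k + 2) => v.val + 1 = x.val ∨ x.val + 1 = v.val), w v x)) := by
  rintro ⟨w, hsym, hlist, hproper⟩
  -- sum at the left endpoint
  have hS0 : ∀ u : Fin (4 * k + 2), u.val = 0 →
      (∑ x ∈ Finset.univ.filter
        (fun x : Fin (4 * k + 2) => u.val + 1 = x.val ∨ x.val + 1 = u.val), w u x)
      = w u ⟨1, by omega⟩ := by
    intro u hu
    rw [show (Finset.univ.filter
        (fun x : Fin (4 * k + 2) => u.val + 1 = x.val ∨ x.val + 1 = u.val))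
        = {(⟨1, by omega⟩ : Fin (4 * k + 2))} from ?_]
    · exact Finset.sum_singleton _ _
    · ext x
      simp only [Finset.mem_filter, Finset.mem_univ, true_and, Finset.mem_singleton,
        Fin.ext_iff]
      omega
  -- sum at the right endpoint
  have hSend : ∀ u : Fin (4 * k + 2), u.val = 4 * k + 1 →
      (∑ x ∈ Finset.univ.filter
        (fun x : Fin (4 * k + 2) => u.val + 1 = x.val ∨ x.val + 1 = u.val), w u x)
      = w u ⟨4 * k, by omega⟩ := by
    intro u hu
    rw [show (Finset.univ.filter
        (fun x : Fin (4 * k + 2) => u.val + 1 = x.val ∨ x.val + 1 = u.val))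
        = {(⟨4 * k, by omega⟩ : Fin (4 * k + 2))} from ?_]
    · exact Finset.sum_singleton _ _
    · ext x
      simp only [Finset.mem_filter, Finset.mem_univ, true_and, Finset.mem_singleton,
        Fin.ext_iff]
      have := x.isLt
      omega
  -- sum at an interior vertex
  have hSmid : ∀ (u : Fin (4 * k + 2)) (i : ℕ) (h : i + 2 ≤ 4 * k + 1), u.val = i + 1 →
      (∑ x ∈ Finset.univ.filter
        (fun x : Fin (4 * k + 2) => u.val + 1 = x.val ∨ x.val + 1 = u.val), w u x)
      = w u ⟨i, by omega⟩ + w u ⟨i + 2, by omega⟩ := by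
    intro u i h hu
    rw [show (Finset.univ.filter
        (fun x : Fin (4 * k + 2) => u.val + 1 = x.val ∨ x.val + 1 = u.val))
        = {(⟨i, by omega⟩ : Fin (4 * k + 2)), (⟨i + 2, by omega⟩ : Fin (4 * k + 2))} from ?_]
    · exact Finset.sum_pair (by simp only [ne_eq, Fin.ext_iff]; omega)
    · ext x
      simp only [Finset.mem_filter, Finset.mem_univ, true_and, Finset.mem_insert,
        Finset.mem_singleton, Fin.ext_iff]
      omega
  -- each edge weight lies in {0, a}
  have hmem : ∀ (i : ℕ) (h : i + 1 ≤ 4 * k + 1),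
      w ⟨i, by omega⟩ ⟨i + 1, by omega⟩ = 0 ∨ w ⟨i, by omega⟩ ⟨i + 1, by omega⟩ = a := by
    intro i h
    have := hlist ⟨i, by omega⟩ ⟨i + 1, by omega⟩ (Or.inl rfl)
    simpa [Set.mem_insert_iff, Set.mem_singleton_iff] using this
  -- alternation: weights two apart differ
  have halt : ∀ (i : ℕ) (h : i + 3 ≤ 4 * k + 1),
      w ⟨i, by omega⟩ ⟨i + 1, by omega⟩ ≠ w ⟨i + 2, by omega⟩ ⟨i + 3, by omega⟩ := by
    intro i h hEq
    have hp := hproper ⟨i + 1, by omega⟩ ⟨i + 2, by omega⟩ (Or.inl rfl)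
    rw [hSmid ⟨i + 1, by omega⟩ i (by omega) rfl,
        hSmid ⟨i + 2, by omega⟩ (i + 1) (by omega) rfl] at hp
    apply hp
    have h1 : w (⟨i + 1, by omega⟩ : Fin (4 * k + 2)) ⟨i + 2, by omega⟩
        = w (⟨i + 2, by omega⟩ : Fin (4 * k + 2)) ⟨i + 1, by omega⟩ := hsym _ _
    have h2 : w (⟨i + 1, by omega⟩ : Fin (4 * k + 2)) ⟨i, by omega⟩
        = w (⟨i, by omega⟩ : Fin (4 * k + 2)) ⟨i + 1, by omega⟩ := hsym _ _
    have h3 : (⟨i + 1 + 2, by omega⟩ : Fin (4 * k + 2)) = ⟨i + 3, by omega⟩ := rfl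
    rw [h1, h2, h3, hEq]
    ring
  -- the second edge has weight a
  have hW1 : w (⟨1, by omega⟩ : Fin (4 * k + 2)) ⟨2, by omega⟩ = a := by
    have hp := hproper ⟨0, by omega⟩ ⟨1, by omega⟩ (Or.inl rfl)
    rw [hS0 ⟨0, by omega⟩ rfl, hSmid ⟨1, by omega⟩ 0 (by omega) rfl] at hp
    have h2 : w (⟨1, by omega⟩ : Fin (4 * k + 2)) ⟨0, by omega⟩
        = w (⟨0, by omega⟩ : Fin (4 * k + 2)) ⟨1, by omega⟩ := hsym _ _
    rw [h2] at hp
    rcases hmem 1 (by omega) with h | h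
    · exact absurd (by rw [show ((⟨1 + 1, by omega⟩ : Fin (4 * k + 2)))
          = (⟨2, by omega⟩ : Fin (4 * k + 2)) from rfl] at h; rw [h]; ring) hp
    · exact h
  -- the second-to-last edge has weight a
  have hWlast : w (⟨4 * k - 1, by omega⟩ : Fin (4 * k + 2)) ⟨4 * k, by omega⟩ = a := by
    have hp := hproper ⟨4 * k + 1, by omega⟩ ⟨4 * k, by omega⟩ (Or.inr rfl)
    rw [hSend ⟨4 * k + 1, by omega⟩ rfl,
        hSmid ⟨4 * k, by omega⟩ (4 * k - 1) (by omega) (show 4 * k = 4 * k - 1 + 1 by omega)] at hp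
    have h1 : w (⟨4 * k + 1, by omega⟩ : Fin (4 * k + 2)) ⟨4 * k, by omega⟩
        = w (⟨4 * k, by omega⟩ : Fin (4 * k + 2)) ⟨4 * k + 1, by omega⟩ := hsym _ _
    have h3 : (⟨4 * k - 1 + 2, by omega⟩ : Fin (4 * k + 2))
        = (⟨4 * k + 1, by omega⟩ : Fin (4 * k + 2)) := Fin.ext (show 4 * k - 1 + 2 = 4 * k + 1 by omega)
    rw [h1, h3] at hp
    have h2 : w (⟨4 * k, by omega⟩ : Fin (4 * k + 2)) ⟨4 * k - 1, by omega⟩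
        = w (⟨4 * k - 1, by omega⟩ : Fin (4 * k + 2)) ⟨4 * k, by omega⟩ := hsym _ _
    rw [h2] at hp
    have hmem' := hmem (4 * k - 1) (by omega)
    have h4 : (⟨4 * k - 1 + 1, by omega⟩ : Fin (4 * k + 2))
        = (⟨4 * k, by omega⟩ : Fin (4 * k + 2)) := Fin.ext (show 4 * k - 1 + 1 = 4 * k by omega)
    rw [h4] at hmem'
    rcases hmem' with h | h
    · exact absurd (by rw [h]; ring) hp
    · exact h
  -- by induction, the edge weights at odd positions alternate a, 0, a, 0, ...
  have hind : ∀ j : ℕ, ∀ _hj : 4 * j + 4 ≤ 4 * k + 1,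
      w (⟨4 * j + 1, by omega⟩ : Fin (4 * k + 2)) ⟨4 * j + 2, by omega⟩ = a ∧
      w (⟨4 * j + 3, by omega⟩ : Fin (4 * k + 2)) ⟨4 * j + 4, by omega⟩ = 0 := by
    intro j
    induction j with
    | zero =>
      intro hj
      refine ⟨hW1, ?_⟩
      have h := halt 1 (by omega)
      rw [hW1] at h
      rcases hmem 3 (by omega) with h0 | h0
      · exact h0
      · exact absurd h0.symm h
    | succ j ih =>
      intro hj
      obtain ⟨_, h3⟩ := ih (by omega)
      have ha5 : w (⟨4 * j + 5, by omega⟩ : Fin (4 * k + 2)) ⟨4 * j + 6, by omega⟩ = a := by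
        have h := halt (4 * j + 3) (by omega)
        rw [h3] at h
        rcases hmem (4 * j + 5) (by omega) with h0 | h0
        · exact absurd h0.symm h
        · exact h0
      have ha7 : w (⟨4 * j + 7, by omega⟩ : Fin (4 * k + 2)) ⟨4 * j + 8, by omega⟩ = 0 := by
        have h := halt (4 * j + 5) (by omega)
        rw [ha5] at h
        rcases hmem (4 * j + 7) (by omega) with h0 | h0
        · exact h0
        · exact absurd h0.symm h
      exact ⟨ha5, ha7⟩
  -- contradiction at position 4k - 1 = 4(k-1) + 3
  obtain ⟨_, hzero⟩ := hind (k - 1) (by omega)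
  have e1 : (⟨4 * (k - 1) + 3, by omega⟩ : Fin (4 * k + 2))
      = (⟨4 * k - 1, by omega⟩ : Fin (4 * k + 2)) := Fin.ext (show 4 * (k - 1) + 3 = 4 * k - 1 by omega)
  have e2 : (⟨4 * (k - 1) + 4, by omega⟩ : Fin (4 * k + 2))
      = (⟨4 * k, by omega⟩ : Fin (4 * k + 2)) := Fin.ext (show 4 * (k - 1) + 4 = 4 * k by omega)
  rw [e1, e2, hWlast] at hzero
  exact absurd hzero.symm (ne_of_lt ha)
end
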